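/- Let a be an element of ℂ (or any field of characteristic 0) with a ≠ 1. Then the formal power series W₀(q) = (1/(1−a)) ∑_{m=0}^{∞} (−1)^{s₂(m)} a^{r₂(m)} q^m satisfies the Mahler functional equation W₀(q) = 1 + a(1 − q)·W₀(q²), where W₀(q²) denotes the substitution of q² into W₀. -/

import Mathlib

/-- `r₂ m = ⌊log m / log 2⌋ + 1` is the number of binary digits of `m`, with `r₂ 0 = 0`. -/
def r2 (m : ℕ) : ℕ := (Nat.digits 2 m).length

/-- `s₂ m` is the sum of the binary digits of `m`, with `s₂ 0 = 0`. -/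
def s2 (m : ℕ) : ℕ := (Nat.digits 2 m).sum

/-- Formal substitution of `q²` into a formal power series: `(substSq f)(q) = f(q²)`. -/
noncomputable def substSq {K : Type*} [Semiring K] (f : PowerSeries K) : PowerSeries K :=
  PowerSeries.mk fun n => if 2 ∣ n then PowerSeries.coeff (n / 2) f else 0

/-- `W₀(q) = (1/(1-a)) ∑_{m=0}^∞ (-1)^{s₂(m)} a^{r₂(m)} q^m` over a field `K`. -/
noncomputable def W0 {K : Type*} [Field K] (a : K) : PowerSeries K :=
  PowerSeries.mk fun m => (1 / (1 - a)) * (-1) ^ s2 m * a ^ r2 m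

lemma digits_odd' (k : ℕ) : Nat.digits 2 (2*k+1) = 1 :: Nat.digits 2 k := by
  rw [Nat.digits_def' (by norm_num) (by omega)]
  have h1 : (2*k+1) % 2 = 1 := by omega
  have h2 : (2*k+1) / 2 = k := by omega
  rw [h1, h2]

lemma digits_even' (k : ℕ) (hk : k ≠ 0) : Nat.digits 2 (2*k) = 0 :: Nat.digits 2 k := by
  rw [Nat.digits_def' (by norm_num) (by omega)]
  have h1 : (2*k) % 2 = 0 := by omega
  have h2 : (2*k) / 2 = k := by omega
  rw [h1, h2]

theorem stmt16 {K : Type*} [Field K] [CharZero K] (a : K) (ha : a ≠ 1) :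
    W0 a = 1 + PowerSeries.C a * (1 - PowerSeries.X) * substSq (W0 a) := by
  have hne : (1 : K) - a ≠ 0 := sub_ne_zero.mpr (Ne.symm ha)
  ext n
  rw [show PowerSeries.C a * (1 - PowerSeries.X) * substSq (W0 a)
      = PowerSeries.C a * substSq (W0 a)
        - PowerSeries.C a * (PowerSeries.X * substSq (W0 a)) by ring]
  rw [map_add, map_sub, PowerSeries.coeff_C_mul, PowerSeries.coeff_C_mul]
  rcases n with _ | n
  · simp only [PowerSeries.coeff_zero_eq_constantCoeff, map_mul, map_sub]
    simp only [W0, substSq, PowerSeries.coeff_zero_eq_constantCoeff_apply,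
      PowerSeries.constantCoeff_one, PowerSeries.constantCoeff_X,
      PowerSeries.constantCoeff_mk, PowerSeries.coeff_mk]
    simp only [r2, s2, Nat.digits_zero, List.sum_nil, List.length_nil, pow_zero,
      mul_one, Nat.zero_div, if_pos (dvd_zero 2)]
    field_simp
    ring
  · rw [PowerSeries.coeff_succ_X_mul]
    have h1 : PowerSeries.coeff (n+1) (1 : PowerSeries K) = 0 := by
      rw [PowerSeries.coeff_one]; simp
    rw [h1, zero_add]
    rcases Nat.even_or_odd (n+1) with ⟨k, hk⟩ | ⟨k, hk⟩
    · -- n+1 = 2k, k ≠ 0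
      have hk' : n + 1 = 2 * k := by omega
      have hk0 : k ≠ 0 := by omega
      have hd1 : 2 ∣ (n+1) := ⟨k, hk'⟩
      have hd2 : ¬ 2 ∣ n := by omega
      have hq : (n+1)/2 = k := by omega
      simp only [W0, substSq, PowerSeries.coeff_mk, if_pos hd1, if_neg hd2, hq,
        mul_zero, sub_zero]
      rw [hk']
      simp only [r2, s2, digits_even' k hk0, List.sum_cons, List.length_cons, pow_succ]
      ring
    · -- n+1 = 2k+1, so n = 2k
      have hk' : n + 1 = 2 * k + 1 := by omega
      have hn : n = 2 * k := by omega
      have hd1 : ¬ 2 ∣ (n+1) := by omega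
      have hd2 : 2 ∣ n := ⟨k, hn⟩
      have hq : n/2 = k := by omega
      simp only [W0, substSq, PowerSeries.coeff_mk, if_neg hd1, if_pos hd2, hq,
        mul_zero, zero_sub]
      rw [hk']
      simp only [r2, s2, digits_odd', List.sum_cons, List.length_cons,
        add_comm 1 (Nat.digits 2 k).sum, pow_succ]
      ring
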